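/- Let k be a field, G a group, c a conjugacy class, and consider the Koszul-type complex K(M): ⋯ → k{c}^{⊗n} ⊗ M → ⋯ → k{c} ⊗ M → M with differential d(g₁⊗⋯⊗gₙ⊗m) = Σᵢ (-1)ⁱ g₁⊗⋯⊗ĝᵢ⊗⋯⊗gₙ⊗ (gₙ⁻¹⋯g_{i+1}⁻¹gᵢg_{i+1}⋯gₙ)·m. Then d² = 0. -/

import Mathlib

section KoszulAux

variable {k : Type*} [Field k] {G : Type*} [Group G] {c : Set G}
  {M : Type*} [AddCommGroup M] [Module k M]

private lemma sa_val {n : ℕ} (p : Fin (n+1)) (x : Fin n) :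
    ((p.succAbove x : Fin (n+1)) : ℕ) = if (x : ℕ) < (p : ℕ) then (x : ℕ) else (x : ℕ) + 1 := by
  rcases lt_or_ge (Fin.castSucc x) p with h | h
  · rw [Fin.succAbove_of_castSucc_lt _ _ h, if_pos (by simpa [Fin.lt_def] using h)]
    rfl
  · have hh : (p : ℕ) ≤ (x : ℕ) := by simpa [Fin.le_def] using h
    rw [Fin.succAbove_of_le_castSucc _ _ h, if_neg (by omega)]
    rfl

private lemma ofFn_sa {α : Type*} {n : ℕ} (f : Fin (n+1) → α) (p : Fin (n+1)) :
    (List.ofFn fun j : Fin n => f (p.succAbove j)) = (List.ofFn f).eraseIdx (p : ℕ) := by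
  have hp : (p : ℕ) < (List.ofFn f).length := by simp [p.isLt]
  apply List.ext_getElem
  · rw [List.length_ofFn, List.length_eraseIdx_of_lt hp, List.length_ofFn]; omega
  · intro l h1 h2
    rw [List.getElem_ofFn, List.getElem_eraseIdx]
    simp only [List.length_ofFn] at h1
    split
    · rw [List.getElem_ofFn]
      congr 1
      apply Fin.ext
      rw [sa_val]
      simp_all
    · rw [List.getElem_ofFn]
      congr 1
      apply Fin.ext
      rw [sa_val]
      simp_all

private lemma eraseIdx_drop_lt {α : Type*} (L : List α) (p t : ℕ) (h : p < t) (hp : p < L.length) :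
    (L.eraseIdx p).drop t = L.drop (t+1) := by
  apply List.ext_getElem
  · simp [List.length_eraseIdx_of_lt hp]
    omega
  · intro l h1 h2
    have h3 : t + l < (L.eraseIdx p).length := by
      simp only [List.length_drop] at h1; omega
    rw [List.getElem_drop, List.getElem_drop, List.getElem_eraseIdx_of_ge h3 (by omega)]
    congr 1
    omega

private lemma eraseIdx_drop_le {α : Type*} (L : List α) (p t : ℕ) (h : t ≤ p) (hp : p < L.length) :
    (L.eraseIdx p).drop t = (L.drop t).take (p - t) ++ L.drop (p+1) := by
  rw [List.eraseIdx_eq_take_drop_succ, List.drop_append]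
  have h1 : (L.take p).length = p := by rw [List.length_take]; omega
  rw [List.drop_take, h1, show t - p = 0 by omega, List.drop_zero]

private lemma prod_drop_split {H : Type*} [Monoid H] (L : List H) (p t : ℕ) (h : t ≤ p)
    (hp : p < L.length) :
    (L.drop t).prod = ((L.drop t).take (p - t)).prod * (L[p] * (L.drop (p+1)).prod) := by
  conv_lhs => rw [← List.take_append_drop (p - t) (L.drop t)]
  rw [List.prod_append, List.drop_drop, show t + (p - t) = p by omega,
    List.drop_eq_getElem_cons hp, List.prod_cons]

/-- The `(x, y)` term of `d ∘ d` applied to `single v m`. -/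
private noncomputable def Tm (ρ : G → Module.End k M) {n : ℕ} (v : Fin (n + 2) → c) (m : M)
    (x : Fin (n + 2)) (y : Fin (n + 1)) : (Fin n → c) →₀ M :=
  (-1 : k) ^ ((x : ℕ) + 1) • ((-1 : k) ^ ((y : ℕ) + 1) •
    Finsupp.single (fun l => v (x.succAbove (y.succAbove l)))
      ((ρ ((List.drop ((y : ℕ) + 1) (List.ofFn fun l => ((v (x.succAbove l) : G)))).prod⁻¹ *
          (v (x.succAbove y) : G) *
          (List.drop ((y : ℕ) + 1) (List.ofFn fun l => ((v (x.succAbove l) : G)))).prod))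
        ((ρ ((List.drop ((x : ℕ) + 1) (List.ofFn fun l => ((v l : G)))).prod⁻¹ * (v x : G) *
            (List.drop ((x : ℕ) + 1) (List.ofFn fun l => ((v l : G)))).prod)) m)))

private lemma key (ρ : G → Module.End k M)
    (hρ : ∀ x y : G, ρ x * ρ y = ρ y * ρ (y⁻¹ * x * y))
    {n : ℕ} (v : Fin (n + 2) → c) (m : M) (i q : Fin (n + 2)) (j j' : Fin (n + 1))
    (h1 : (i : ℕ) ≤ (j : ℕ)) (h2 : (q : ℕ) = (j : ℕ) + 1) (h3 : (j' : ℕ) = (i : ℕ)) :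
    Tm ρ v m i j + Tm ρ v m q j' = 0 := by
  have hi : (i : ℕ) < n + 1 := by have := j.isLt; omega
  obtain rfl : q = j.succ := Fin.ext (by simpa using h2)
  obtain rfl : j' = ⟨(i : ℕ), hi⟩ := Fin.ext (by simpa using h3)
  unfold Tm
  simp only [Fin.val_succ]
  set L : List G := List.ofFn fun l => ((v l : G)) with hLdef
  have hLlen : L.length = n + 2 := by simp [hLdef]
  -- identify the succAbove values
  have hiq : i.succAbove j = j.succ :=
    Fin.succAbove_of_le_castSucc _ _ (by rw [Fin.le_def]; simpa using h1)
  have hqi : j.succ.succAbove ⟨(i : ℕ), hi⟩ = i := by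
    rw [Fin.succAbove_of_castSucc_lt _ _ (by rw [Fin.lt_def]; simp; omega)]
    exact Fin.ext (by simp)
  rw [hiq, hqi]
  -- identify the lists
  have e1 : (List.ofFn fun l => ((v (i.succAbove l) : G))) = L.eraseIdx (i : ℕ) := ofFn_sa (fun l => ((v l : G))) i
  have e2 : (List.ofFn fun l => ((v (j.succ.succAbove l) : G))) = L.eraseIdx ((j : ℕ) + 1) :=
    ofFn_sa (fun l => ((v l : G))) j.succ
  rw [e1, e2]
  rw [eraseIdx_drop_lt L (i : ℕ) ((j : ℕ) + 1) (by omega) (by omega)]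
  rw [eraseIdx_drop_le L ((j : ℕ) + 1) ((i : ℕ) + 1) (by omega) (by omega)]
  rw [List.prod_append]
  -- abbreviations
  set P : G := (L.drop ((j : ℕ) + 1 + 1)).prod with hP
  set D : G := (L.drop ((i : ℕ) + 1)).prod with hD
  set T : G := ((L.drop ((i : ℕ) + 1)).take ((j : ℕ) + 1 - ((i : ℕ) + 1))).prod with hT
  set wq : G := (v j.succ : G) with hwq
  set wi : G := (v i : G) with hwi
  -- the two deleted-index functions agree
  have hf : (fun l : Fin n => v (i.succAbove (j.succAbove l)))
      = fun l : Fin n => v (j.succ.succAbove ((⟨(i : ℕ), hi⟩ : Fin (n + 1)).succAbove l)) := by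
    funext l
    congr 1
    apply Fin.ext
    have hl := l.isLt
    simp only [sa_val, Fin.val_succ]
    split_ifs <;> omega
  rw [hf]
  -- the product split
  have hgetq : L[(j : ℕ) + 1]'(by omega) = wq := by
    have h' : (j : ℕ) + 1 < (List.ofFn fun l => ((v l : G))).length := by rw [List.length_ofFn]; omega
    have hg := List.getElem_ofFn (f := fun l => ((v l : G))) (i := (j : ℕ) + 1) h'
    exact hg.trans (congrArg (fun t => ((v t : G))) (Fin.ext (by simp)))
  have hsplit : D = T * (wq * P) := by
    have h := prod_drop_split L ((j : ℕ) + 1) ((i : ℕ) + 1) (by omega) (by omega)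
    rw [hgetq] at h
    exact h
  -- the Hurwitz relation
  have hop : (ρ ((T * P)⁻¹ * wi * (T * P))) ((ρ (P⁻¹ * wq * P)) m)
      = (ρ (P⁻¹ * wq * P)) ((ρ (D⁻¹ * wi * D)) m) := by
    have hmul := hρ ((T * P)⁻¹ * wi * (T * P)) (P⁻¹ * wq * P)
    have hgrp : (P⁻¹ * wq * P)⁻¹ * ((T * P)⁻¹ * wi * (T * P)) * (P⁻¹ * wq * P)
        = D⁻¹ * wi * D := by
      rw [hsplit]; group
    calc (ρ ((T * P)⁻¹ * wi * (T * P))) ((ρ (P⁻¹ * wq * P)) m)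
        = ((ρ ((T * P)⁻¹ * wi * (T * P))) * (ρ (P⁻¹ * wq * P))) m := rfl
      _ = ((ρ (P⁻¹ * wq * P)) * (ρ ((P⁻¹ * wq * P)⁻¹ * ((T * P)⁻¹ * wi * (T * P)) *
            (P⁻¹ * wq * P)))) m := by rw [hmul]
      _ = (ρ (P⁻¹ * wq * P)) ((ρ (D⁻¹ * wi * D)) m) := by rw [hgrp]; rfl
  rw [hop]
  rw [smul_smul, smul_smul, ← add_smul]
  have hc : ((-1 : k) ^ ((i : ℕ) + 1) * (-1 : k) ^ ((j : ℕ) + 1)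
      + (-1 : k) ^ ((j : ℕ) + 1 + 1) * (-1 : k) ^ ((i : ℕ) + 1)) = 0 := by
    rw [pow_succ (-1 : k) ((j : ℕ) + 1)]
    ring
  rw [hc, zero_smul]



private def invo (n : ℕ) : Fin (n + 2) × Fin (n + 1) → Fin (n + 2) × Fin (n + 1) := fun p =>
  if h : (p.1 : ℕ) ≤ (p.2 : ℕ) then
    (p.2.succ, ⟨(p.1 : ℕ), by have := p.2.isLt; omega⟩)
  else
    (Fin.castSucc p.2, ⟨(p.1 : ℕ) - 1, by have := p.1.isLt; omega⟩)

private lemma invo_pos {n : ℕ} (a : Fin (n + 2)) (b : Fin (n + 1)) (h : (a : ℕ) ≤ (b : ℕ)) :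
    invo n (a, b) = (b.succ, ⟨(a : ℕ), by have := b.isLt; omega⟩) := by
  unfold invo; rw [dif_pos h]

private lemma invo_neg {n : ℕ} (a : Fin (n + 2)) (b : Fin (n + 1)) (h : ¬ (a : ℕ) ≤ (b : ℕ)) :
    invo n (a, b) = (Fin.castSucc b, ⟨(a : ℕ) - 1, by have := a.isLt; omega⟩) := by
  unfold invo; rw [dif_neg h]

private lemma invo_invo {n : ℕ} (p : Fin (n + 2) × Fin (n + 1)) : invo n (invo n p) = p := by
  obtain ⟨a, b⟩ := p
  by_cases h : (a : ℕ) ≤ (b : ℕ)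
  · rw [invo_pos a b h, invo_neg _ _ (by show ¬ ((b : ℕ) + 1 ≤ (a : ℕ)); omega)]
    rw [Prod.ext_iff]
    constructor <;> apply Fin.ext
    · show (a : ℕ) = (a : ℕ); rfl
    · show (b : ℕ) + 1 - 1 = (b : ℕ); omega
  · rw [invo_neg a b h, invo_pos _ _ (by show (b : ℕ) ≤ (a : ℕ) - 1; omega)]
    rw [Prod.ext_iff]
    constructor <;> apply Fin.ext
    · show (a : ℕ) - 1 + 1 = (a : ℕ); omega
    · show (b : ℕ) = (b : ℕ); rfl

private lemma invo_ne {n : ℕ} (p : Fin (n + 2) × Fin (n + 1)) : invo n p ≠ p := by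
  obtain ⟨a, b⟩ := p
  by_cases h : (a : ℕ) ≤ (b : ℕ)
  · rw [invo_pos a b h]
    intro he
    have h2 : ((b.succ : Fin (n + 2)) : ℕ) = (a : ℕ) :=
      congrArg (fun z : Fin (n + 2) × Fin (n + 1) => ((z.1 : ℕ))) he
    simp only [Fin.val_succ] at h2
    omega
  · rw [invo_neg a b h]
    intro he
    have h2 : ((Fin.castSucc b : Fin (n + 2)) : ℕ) = (a : ℕ) :=
      congrArg (fun z : Fin (n + 2) × Fin (n + 1) => ((z.1 : ℕ))) he
    simp only [Fin.coe_castSucc] at h2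
    omega



end KoszulAux

/-- The differential of the Koszul-type complex `K(M)` of Ellenberg–Venkatesh–Westerland:
on `k{c}^{⊗(n+1)} ⊗ M` (modelled as finitely supported functions from tuples in `c` to
`M`) it is `d(g₁⊗⋯⊗gₙ⊗m) = Σᵢ (±1) g₁⊗⋯⊗ĝᵢ⊗⋯⊗gₙ⊗(gₙ⁻¹⋯g_{i+1}⁻¹gᵢg_{i+1}⋯gₙ)·m`,
where `ρ x` is the action of `[x]` on `M`. -/
noncomputable def koszulD (k : Type*) [Field k] (G : Type*) [Group G] (c : Set G)
    (M : Type*) [AddCommGroup M] [Module k M] (ρ : G → Module.End k M) (n : ℕ) :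
    ((Fin (n + 1) → c) →₀ M) →ₗ[k] ((Fin n → c) →₀ M) :=
  Finsupp.lsum k fun v =>
    ∑ i : Fin (n + 1),
      ((-1 : k) ^ ((i : ℕ) + 1)) •
        (Finsupp.lsingle (fun j => v (i.succAbove j))).comp
          (ρ (((List.ofFn fun j => (v j : G)).drop ((i : ℕ) + 1)).prod⁻¹ * (v i : G) *
              ((List.ofFn fun j => (v j : G)).drop ((i : ℕ) + 1)).prod))

/-- For any module `M` over the ring of components (i.e. any `k`-module with operators
`ρ x` for `x ∈ G` satisfying the Hurwitz relation `[x][y] = [y][y⁻¹xy]`), the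
differential of the complex `K(M)` squares to zero. -/
theorem stmt11 (k : Type*) [Field k] (G : Type*) [Group G] (c : Set G)
    (hc : ∀ g ∈ c, ∀ x : G, x⁻¹ * g * x ∈ c)
    (M : Type*) [AddCommGroup M] [Module k M] (ρ : G → Module.End k M)
    (hρ : ∀ x y : G, ρ x * ρ y = ρ y * ρ (y⁻¹ * x * y)) :
    ∀ n : ℕ, (koszulD k G c M ρ n).comp (koszulD k G c M ρ (n + 1)) = 0 := by
  intro n
  apply Finsupp.lhom_ext
  intro v m
  rw [LinearMap.comp_apply]
  simp only [koszulD, Finsupp.lsum_single, LinearMap.sum_apply, LinearMap.smul_apply,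
    LinearMap.comp_apply, Finsupp.lsingle_apply, map_sum, map_smul, LinearMap.zero_apply,
    Finset.smul_sum]
  have hg1 : ∀ p : Fin (n + 2) × Fin (n + 1),
      Tm ρ v m p.1 p.2 + Tm ρ v m (invo n p).1 (invo n p).2 = 0 := by
    intro ⟨a, b⟩
    by_cases h : (a : ℕ) ≤ (b : ℕ)
    · rw [invo_pos a b h]
      exact key ρ hρ v m a b.succ b ⟨(a : ℕ), by have := b.isLt; omega⟩ h rfl rfl
    · rw [invo_neg a b h, add_comm]
      exact key ρ hρ v m (Fin.castSucc b) a ⟨(a : ℕ) - 1, by have := a.isLt; omega⟩ b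
        (by show (b : ℕ) ≤ (a : ℕ) - 1; omega)
        (by show (a : ℕ) = (a : ℕ) - 1 + 1; omega) rfl
  have main : ∑ p : Fin (n + 2) × Fin (n + 1), Tm ρ v m p.1 p.2 = 0 :=
    Finset.sum_ninvolution (invo n) hg1 (fun p _ => invo_ne p)
      (fun _ => Finset.mem_univ _) invo_invo
  exact (Fintype.sum_prod_type
    (f := fun p : Fin (n + 2) × Fin (n + 1) => Tm ρ v m p.1 p.2)).symm.trans main
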